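/- For positive reals a, b with s·a ≤ b ≤ t·a for some 1 ≤ s ≤ t, and v ∈ [0,1]: g_v(s)·a ≤ (1-v)a + vb - a^(1-v)b^v ≤ g_v(t)·a, where g_v(x) = (1-v) + vx - x^v. -/

import Mathlib

open Real

lemma gv_mono {x y v : ℝ} (hx : 1 ≤ x) (hxy : x ≤ y) (hv0 : 0 ≤ v) (hv1 : v ≤ 1) :
    (1 - v) + v * x - x ^ v ≤ (1 - v) + v * y - y ^ v := by
  have hx0 : (0:ℝ) < x := lt_of_lt_of_le one_pos hx
  have hy0 : (0:ℝ) < y := lt_of_lt_of_le hx0 hxy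
  have hu : (-1:ℝ) ≤ y / x - 1 := by
    have : 0 < y / x := div_pos hy0 hx0
    linarith
  have h1 : (1 + (y / x - 1)) ^ v ≤ 1 + v * (y / x - 1) :=
    rpow_one_add_le_one_add_mul_self hu hv0 hv1
  have h2 : y ^ v ≤ x ^ v * (1 + v * (y / x - 1)) := by
    have hyx : y = x * (1 + (y / x - 1)) := by field_simp; ring
    calc y ^ v = (x * (1 + (y / x - 1))) ^ v := by rw [← hyx]
      _ = x ^ v * (1 + (y / x - 1)) ^ v := Real.mul_rpow hx0.le (by linarith)
      _ ≤ x ^ v * (1 + v * (y / x - 1)) := by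
          exact mul_le_mul_of_nonneg_left h1 (Real.rpow_nonneg hx0.le v)
  have h3 : x ^ v * (1 + v * (y / x - 1)) = x ^ v + v * (x ^ (v - 1) * (y - x)) := by
    have : x ^ (v - 1) = x ^ v / x := by
      rw [Real.rpow_sub hx0, Real.rpow_one]
    rw [this]
    field_simp
  have h4 : x ^ (v - 1) ≤ 1 := Real.rpow_le_one_of_one_le_of_nonpos hx (by linarith)
  have h5 : v * (x ^ (v - 1) * (y - x)) ≤ v * (y - x) := by
    have hyx' : 0 ≤ y - x := by linarith
    have : x ^ (v - 1) * (y - x) ≤ 1 * (y - x) :=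
      mul_le_mul_of_nonneg_right h4 hyx'
    nlinarith
  nlinarith [h2, h3]

theorem stmt_15 (a b s t v : ℝ) (ha : 0 < a) (hb : 0 < b)
    (hs : 1 ≤ s) (hst : s ≤ t)
    (hsa : s * a ≤ b) (hbt : b ≤ t * a) (hv0 : 0 ≤ v) (hv1 : v ≤ 1) :
    ((1 - v) + v * s - s ^ v) * a ≤ (1 - v) * a + v * b - a ^ (1 - v) * b ^ v ∧
    (1 - v) * a + v * b - a ^ (1 - v) * b ^ v ≤ ((1 - v) + v * t - t ^ v) * a := by
  have hsx : s ≤ b / a := (le_div_iff₀ ha).mpr hsa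
  have hxt : b / a ≤ t := (div_le_iff₀ ha).mpr hbt
  have hx1 : 1 ≤ b / a := le_trans hs hsx
  have hkey : a ^ (1 - v) * b ^ v = a * (b / a) ^ v := by
    rw [Real.div_rpow hb.le ha.le, Real.rpow_sub ha, Real.rpow_one]
    field_simp
  have hmid : (1 - v) * a + v * b - a ^ (1 - v) * b ^ v
      = ((1 - v) + v * (b / a) - (b / a) ^ v) * a := by
    rw [hkey]; field_simp
  constructor
  · rw [hmid]
    exact mul_le_mul_of_nonneg_right (gv_mono hs hsx hv0 hv1) ha.le
  · rw [hmid]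
    exact mul_le_mul_of_nonneg_right (gv_mono hx1 hxt hv0 hv1) ha.le
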